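/- If M is a positive semidefinite n×n complex matrix, then M∘M̄ - (1/n)·(diag M)·(diag M)^T is positive semidefinite, where diag M is the column vector of diagonal entries of M and M̄ is the entrywise conjugate. -/

import Mathlib

open scoped ComplexOrder
open Matrix
open scoped MatrixOrder

lemma aux_cs {n : ℕ} (B : Matrix (Fin n) (Fin n) ℂ) :
    (n : ℝ)⁻¹ * Complex.normSq (Matrix.trace B) ≤ ∑ i, ∑ l, Complex.normSq (B i l) := by
  set S : ℝ := ∑ i, ∑ l, Complex.normSq (B i l) with hS
  have hSnn : 0 ≤ S := by
    rw [hS]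
    exact Finset.sum_nonneg fun i _ => Finset.sum_nonneg fun l _ => Complex.normSq_nonneg _
  have h1 : Complex.normSq (Matrix.trace B) ≤ (n : ℝ) * S := by
    have habs : ‖Matrix.trace B‖ ≤ ∑ i, ‖B i i‖ := by
      simpa [Matrix.trace, Matrix.diag] using norm_sum_le Finset.univ (fun i => B i i)
    have hsq : (∑ i, ‖B i i‖) ^ 2 ≤ (n : ℝ) * ∑ i, ‖B i i‖ ^ 2 := by
      simpa using sq_sum_le_card_mul_sum_sq (s := (Finset.univ : Finset (Fin n)))
        (f := fun i => ‖B i i‖)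
    have hdiag : ∑ i, ‖B i i‖ ^ 2 ≤ S := by
      rw [hS]
      refine Finset.sum_le_sum fun i _ => ?_
      rw [Complex.sq_norm]
      exact Finset.single_le_sum (f := fun l => Complex.normSq (B i l))
        (fun l _ => Complex.normSq_nonneg _) (Finset.mem_univ i)
    calc Complex.normSq (Matrix.trace B) = ‖Matrix.trace B‖ ^ 2 :=
          (Complex.sq_norm _).symm
      _ ≤ (∑ i, ‖B i i‖) ^ 2 := by
          apply pow_le_pow_left₀ (norm_nonneg _) habs
      _ ≤ (n : ℝ) * ∑ i, ‖B i i‖ ^ 2 := hsq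
      _ ≤ (n : ℝ) * S := mul_le_mul_of_nonneg_left hdiag (by positivity)
  rcases eq_or_ne n 0 with h0 | h0
  · simp [h0, hSnn]
  · have hn : (0:ℝ) < n := by positivity
    calc (n : ℝ)⁻¹ * Complex.normSq (Matrix.trace B) ≤ (n : ℝ)⁻¹ * ((n:ℝ) * S) :=
          mul_le_mul_of_nonneg_left h1 (by positivity)
      _ = S := by field_simp

theorem hadamard_conj_diag_bound {n : ℕ} (M : Matrix (Fin n) (Fin n) ℂ)
    (hM : M.PosSemidef) :
    (Matrix.hadamard M (M.map star) -
      (n : ℂ)⁻¹ • Matrix.vecMulVec M.diag M.diag).PosSemidef := by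
  classical
  have hH := hM.1
  have hdr : ∀ i, star (M i i) = M i i := fun i => hH.apply i i
  refine Matrix.PosSemidef.of_dotProduct_mulVec_nonneg ?_ ?_
  · -- Hermitian
    show _ᴴ = _
    ext i j
    simp only [conjTranspose_apply, Matrix.sub_apply, Matrix.smul_apply, Matrix.hadamard_apply,
      Matrix.map_apply, Matrix.vecMulVec_apply, Matrix.diag_apply, star_sub, star_mul',
      smul_eq_mul, star_star, star_inv₀, star_natCast]
    rw [hH.apply i j, hH.apply j i, hdr, hdr]
    ring
  · intro x
    set A := CFC.sqrt M with hAdef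
    have hAe : Aᴴ = A := (Matrix.nonneg_iff_posSemidef.mp (CFC.sqrt_nonneg M)).1
    have hAA : A * A = M := CFC.sqrt_mul_sqrt_self M (Matrix.nonneg_iff_posSemidef.mpr hM)
    set D : Matrix (Fin n) (Fin n) ℂ := Matrix.diagonal (star x) with hD
    set D' : Matrix (Fin n) (Fin n) ℂ := Matrix.diagonal x with hD'
    set B : Matrix (Fin n) (Fin n) ℂ := A * D * A with hB
    have hBH : Bᴴ = A * D' * A := by
      simp [hB, hD, hD', conjTranspose_mul, diagonal_conjTranspose, hAe, mul_assoc]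
    have htr1 : Matrix.trace (B * Bᴴ) = Matrix.trace (D * M * D' * M) := by
      rw [hB, hBH, show A * D * A * (A * D' * A) = A * ((D * M * D') * A) by
        rw [← hAA]; noncomm_ring, Matrix.trace_mul_comm, mul_assoc, hAA]
    have htr2 : Matrix.trace B = Matrix.trace (M * D) := by
      rw [hB, Matrix.trace_mul_cycle, hAA]
    have hsum1 : Matrix.trace (D * M * D' * M)
        = ∑ i, ∑ k, star (x i) * M i k * x k * M k i := by
      simp [Matrix.trace, Matrix.mul_apply, hD, hD', Matrix.diagonal_apply, ite_mul, mul_ite,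
        Finset.sum_ite_eq, Finset.sum_ite_eq', Finset.sum_mul, Finset.mul_sum]
    have hsum2 : Matrix.trace (M * D) = ∑ i, star (x i) * M i i := by
      simp [Matrix.trace, hD, Matrix.mul_diagonal, mul_comm]
    have hsum3 : Matrix.trace (B * Bᴴ) = ∑ i, ∑ l, (Complex.normSq (B i l) : ℂ) := by
      simp [Matrix.trace, Matrix.mul_apply, Matrix.conjTranspose_apply, Complex.mul_conj]
    have hform : star x ⬝ᵥ (Matrix.hadamard M (M.map star) *ᵥ x)
        = Matrix.trace (B * Bᴴ) := by
      rw [htr1, hsum1]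
      simp only [dotProduct, mulVec, hadamard_apply, map_apply, Finset.mul_sum, Pi.star_apply]
      refine Finset.sum_congr rfl fun i _ => Finset.sum_congr rfl fun k _ => ?_
      rw [hH.apply k i]
      ring
    have hrank : star x ⬝ᵥ (Matrix.vecMulVec M.diag M.diag *ᵥ x)
        = Matrix.trace B * star (Matrix.trace B) := by
      rw [htr2, hsum2]
      have hst : star (∑ i, star (x i) * M i i) = ∑ i, M i i * x i := by
        rw [star_sum]
        refine Finset.sum_congr rfl fun i _ => ?_
        rw [star_mul', star_star, hdr]
        exact mul_comm _ _
      rw [hst]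
      simp only [dotProduct, mulVec, vecMulVec_apply, Matrix.diag_apply, Finset.mul_sum,
        Finset.sum_mul, Pi.star_apply]
      rw [Finset.sum_comm]
      refine Finset.sum_congr rfl fun i _ => Finset.sum_congr rfl fun k _ => ?_
      ring
    have hms : Matrix.trace B * star (Matrix.trace B)
        = (Complex.normSq (Matrix.trace B) : ℂ) := by
      rw [Complex.star_def, Complex.mul_conj]
    rw [Matrix.sub_mulVec, dotProduct_sub, Matrix.smul_mulVec, dotProduct_smul,
      smul_eq_mul, hform, hrank, hsum3, hms]
    have hc : ∑ i, ∑ l, (Complex.normSq (B i l) : ℂ)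
          - (n:ℂ)⁻¹ * (Complex.normSq (Matrix.trace B) : ℂ)
        = (((∑ i, ∑ l, Complex.normSq (B i l))
          - (n:ℝ)⁻¹ * Complex.normSq (Matrix.trace B) : ℝ) : ℂ) := by
      push_cast
      ring
    rw [hc, Complex.zero_le_real, sub_nonneg]
    exact aux_cs B
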